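/- Let f : ℝⁿ → ℝ be a polynomial of degree d ≥ 2 and let ξ(t) = Σ_{-(d-1)d^{n-1} ≤ k ≤ d^{n-1}} a_k t^k be a rational arc satisfying: (a') Σ_{k>0} Σ_j a_{kj}² = 1; (b') f(ξ(t)) = b₀ + Σ_{k≥1} b_k t^{-k}; (d') x_j(∂f/∂x_i)(ξ(t)) = Σ_{k≥1} d_{ijk} t^{-k} for all i,j. Then b₀ ∈ K_∞(f), i.e., b₀ is an asymptotic critical value of f. -/

import Mathlib

open Filter Topology MvPolynomial Set

noncomputable section

/-- The polynomial function `ℝⁿ → ℝ` associated to `P`. -/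
def fe (n : ℕ) (P : MvPolynomial (Fin n) ℝ) (x : EuclideanSpace ℝ (Fin n)) : ℝ :=
  MvPolynomial.eval (fun j => x j) P

/-- `K_∞(f)`: asymptotic critical (Malgrange nonregular) values of `f : ℝⁿ → ℝ`. -/
def Kinf1 (n : ℕ) (P : MvPolynomial (Fin n) ℝ) : Set ℝ :=
  {c | ∃ x : ℕ → EuclideanSpace ℝ (Fin n),
    Tendsto (fun m => ‖x m‖) atTop atTop ∧
    Tendsto (fun m => fe n P (x m)) atTop (𝓝 c) ∧
    Tendsto (fun m => ‖x m‖ * ‖gradient (fe n P) (x m)‖) atTop (𝓝 0)}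

lemma hasFDerivAt_fe (n : ℕ) (P : MvPolynomial (Fin n) ℝ) (x : EuclideanSpace ℝ (Fin n)) :
    HasFDerivAt (fe n P)
      (∑ i, MvPolynomial.eval (fun j => x j) (MvPolynomial.pderiv i P) •
        (EuclideanSpace.proj i : EuclideanSpace ℝ (Fin n) →L[ℝ] ℝ)) x := by
  induction P using MvPolynomial.induction_on with
  | C a =>
      simp only [pderiv_C, map_zero, zero_smul, Finset.sum_const_zero]
      have h : fe n (C a) = fun _ => a := by funext y; simp [fe]
      rw [h]
      exact hasFDerivAt_const a x
  | add p q hp hq =>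
      have h : fe n (p + q) = fun y => fe n p y + fe n q y := by funext y; simp [fe]
      rw [h]
      refine (hp.add hq).congr_fderiv ?_
      rw [← Finset.sum_add_distrib]
      refine Finset.sum_congr rfl fun i _ => ?_
      simp [add_smul]
  | mul_X p i hp =>
      have h : fe n (p * X i) = fun y => fe n p y * y i := by
        funext y; simp [fe]
      rw [h]
      have hproj : HasFDerivAt (fun y : EuclideanSpace ℝ (Fin n) => y i)
          (EuclideanSpace.proj i : EuclideanSpace ℝ (Fin n) →L[ℝ] ℝ) x :=
        (EuclideanSpace.proj i : EuclideanSpace ℝ (Fin n) →L[ℝ] ℝ).hasFDerivAt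
      refine (hp.mul hproj).congr_fderiv ?_
      ext v
      simp only [ContinuousLinearMap.sum_apply, ContinuousLinearMap.smul_apply,
        ContinuousLinearMap.add_apply, PiLp.proj_apply, smul_eq_mul,
        Derivation.leibniz, pderiv_X, map_add, map_mul, eval_X, Pi.single_apply,
        apply_ite (MvPolynomial.eval fun j => x j), map_one, map_zero, add_mul]
      rw [Finset.sum_add_distrib]
      congr 1
      · simp [mul_ite, ite_mul, eq_comm, fe]
      · rw [Finset.mul_sum]
        exact Finset.sum_congr rfl fun j _ => by ring

lemma gradient_fe (n : ℕ) (P : MvPolynomial (Fin n) ℝ) (x : EuclideanSpace ℝ (Fin n)) :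
    gradient (fe n P) x =
      (WithLp.toLp 2 (fun i => MvPolynomial.eval (fun j => x j) (MvPolynomial.pderiv i P)) :
        EuclideanSpace ℝ (Fin n)) := by
  apply HasGradientAt.gradient
  rw [hasGradientAt_iff_hasFDerivAt]
  refine (hasFDerivAt_fe n P x).congr_fderiv ?_
  ext v
  simp [InnerProductSpace.toDual_apply_apply, PiLp.inner_apply, RCLike.inner_apply,
    PiLp.proj_apply, real_inner_comm, mul_comm]

lemma tendsto_laurent_zero (s : Finset ℕ) (c : ℕ → ℝ) (hs : ∀ k ∈ s, 1 ≤ k) :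
    Tendsto (fun t : ℝ => ∑ k ∈ s, c k * t ^ (-(k : ℤ))) atTop (𝓝 0) := by
  have h : Tendsto (fun t : ℝ => ∑ k ∈ s, c k * t ^ (-(k : ℤ))) atTop
      (𝓝 (∑ k ∈ s, 0)) := by
    refine tendsto_finset_sum _ fun k hk => ?_
    have hk1 : (-(k : ℤ)) < 0 := by
      have := hs k hk; omega
    simpa using (tendsto_zpow_atTop_zero hk1).const_mul (c k)
  simpa using h

lemma tendsto_abs_laurent_atTop (S : Finset ℤ) (c : ℤ → ℝ)
    (h : ∃ k ∈ S, 0 < k ∧ c k ≠ 0) :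
    Tendsto (fun t : ℝ => |∑ k ∈ S, c k * t ^ k|) atTop atTop := by
  obtain ⟨k₀, hk₀S, hk₀pos, hk₀ne⟩ := h
  set T := S.filter (fun k => c k ≠ 0) with hT
  have hTne : T.Nonempty := ⟨k₀, Finset.mem_filter.2 ⟨hk₀S, hk₀ne⟩⟩
  set K := T.max' hTne with hK
  have hKS : K ∈ S := (Finset.mem_filter.1 (T.max'_mem hTne)).1
  have hcK : c K ≠ 0 := (Finset.mem_filter.1 (T.max'_mem hTne)).2
  have hKpos : 0 < K := lt_of_lt_of_le hk₀pos
    (T.le_max' k₀ (Finset.mem_filter.2 ⟨hk₀S, hk₀ne⟩))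
  have htop : ∀ k ∈ S, K < k → c k = 0 := by
    intro k hkS hkK
    by_contra hne
    exact absurd (T.le_max' k (Finset.mem_filter.2 ⟨hkS, hne⟩)) (not_le.2 hkK)
  set g := fun t : ℝ => ∑ k ∈ S, c k * t ^ (k - K) with hg
  have hgl : Tendsto g atTop (𝓝 (c K)) := by
    have h1 : Tendsto g atTop (𝓝 (∑ k ∈ S, if k = K then c K else 0)) := by
      refine tendsto_finset_sum _ fun k hkS => ?_
      rcases eq_or_ne k K with rfl | hne
      · simpa using tendsto_const_nhds (x := c k)
      · simp only [if_neg hne]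
        rcases eq_or_ne (c k) 0 with hc0 | hc0
        · simpa [hc0] using tendsto_const_nhds (x := (0:ℝ))
        · have hklt : k < K := by
            rcases lt_or_gt_of_ne hne with h' | h'
            · exact h'
            · exact absurd (htop k hkS h') hc0
          have : (k - K : ℤ) < 0 := by omega
          simpa using (tendsto_zpow_atTop_zero this).const_mul (c k)
    simpa [Finset.sum_ite_eq' S K (fun _ => c K), hKS] using h1
  have hmain : Tendsto (fun t : ℝ => |t ^ K| * |g t|) atTop atTop := by
    refine Tendsto.atTop_mul_pos (abs_pos.2 hcK) ?_ hgl.abs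
    have h2 : Tendsto (fun t : ℝ => t ^ K) atTop atTop := tendsto_zpow_atTop_atTop hKpos
    exact tendsto_abs_atTop_atTop.comp h2
  refine hmain.congr' ?_
  filter_upwards [eventually_gt_atTop (0:ℝ)] with t ht
  rw [← abs_mul]
  congr 1
  rw [Finset.mul_sum]
  refine Finset.sum_congr rfl fun k _ => ?_
  rw [← mul_assoc, mul_comm (t ^ K) (c k), mul_assoc, ← zpow_add₀ (ne_of_gt ht)]
  ring_nf

/-- If the rational arc `ξ(t) = Σ_{-(d-1)d^{n-1} ≤ k ≤ d^{n-1}} aₖ tᵏ` satisfies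
(a') `Σ_{k>0} Σⱼ a_{kj}² = 1`, (b') `f(ξ(t)) = b₀ + Σ_{k≥1} bₖ t^{-k}`, and
(d') `ξⱼ(t) ∂f/∂xᵢ(ξ(t)) = Σ_{k≥1} d_{ijk} t^{-k}` for all `i, j`,
then `b₀ ∈ K_∞(f)`. -/
theorem arc_gives_asymptotic_critical_value (n d : ℕ) (hd : 2 ≤ d)
    (P : MvPolynomial (Fin n) ℝ) (hdeg : P.totalDegree = d)
    (A : ℤ → EuclideanSpace ℝ (Fin n)) (ξ : ℝ → EuclideanSpace ℝ (Fin n))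
    (hξ : ∀ t : ℝ, ξ t =
      ∑ k ∈ Finset.Icc (-(((d : ℤ) - 1) * (d : ℤ) ^ (n - 1))) ((d : ℤ) ^ (n - 1)),
        t ^ k • A k)
    (ha' : ∑ k ∈ (Finset.Icc (-(((d : ℤ) - 1) * (d : ℤ) ^ (n - 1)))
        ((d : ℤ) ^ (n - 1))).filter (fun k => 0 < k), ∑ j : Fin n, (A k j) ^ 2 = 1)
    (b₀ : ℝ) (sb : Finset ℕ) (b : ℕ → ℝ) (hsb : ∀ k ∈ sb, 1 ≤ k)
    (hb' : ∀ t : ℝ, t ≠ 0 →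
      fe n P (ξ t) = b₀ + ∑ k ∈ sb, b k * t ^ (-(k : ℤ)))
    (hd' : ∀ i j : Fin n, ∃ (sd : Finset ℕ) (dd : ℕ → ℝ), (∀ k ∈ sd, 1 ≤ k) ∧
      ∀ t : ℝ, t ≠ 0 →
        ξ t j * MvPolynomial.eval (fun l => ξ t l) (MvPolynomial.pderiv i P) =
          ∑ k ∈ sd, dd k * t ^ (-(k : ℤ))) :
    b₀ ∈ Kinf1 n P := by
  set S : Finset ℤ :=
    Finset.Icc (-(((d : ℤ) - 1) * (d : ℤ) ^ (n - 1))) ((d : ℤ) ^ (n - 1)) with hS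
  -- Part 2 : value limit
  have hfe : Tendsto (fun t : ℝ => fe n P (ξ t)) atTop (𝓝 b₀) := by
    have h0 := (tendsto_laurent_zero sb b hsb).const_add b₀
    rw [add_zero] at h0
    refine h0.congr' ?_
    filter_upwards [eventually_gt_atTop (0 : ℝ)] with t ht
    exact (hb' t (ne_of_gt ht)).symm
  -- existence of a nonzero positive-order coefficient
  have hex : ∃ k ∈ S.filter (fun k => 0 < k), ∃ j : Fin n, A k j ≠ 0 := by
    by_contra hcon
    push_neg at hcon
    have hz : ∑ k ∈ S.filter (fun k => 0 < k), ∑ j : Fin n, (A k j) ^ 2 = 0 :=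
      Finset.sum_eq_zero fun k hk => Finset.sum_eq_zero fun j _ => by
        rw [hcon k hk j]; ring
    rw [ha'] at hz
    exact one_ne_zero hz
  obtain ⟨k₀, hk₀, j₀, hA⟩ := hex
  obtain ⟨hk₀S, hk₀pos⟩ := Finset.mem_filter.1 hk₀
  -- coordinate formula
  have hcoord : ∀ t : ℝ, ξ t j₀ = ∑ k ∈ S, A k j₀ * t ^ k := by
    intro t
    rw [hξ t]
    rw [WithLp.ofLp_sum, Finset.sum_apply]
    exact Finset.sum_congr rfl fun k _ => by
      simp [PiLp.smul_apply, smul_eq_mul, mul_comm]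
  have habs : ∀ (x : EuclideanSpace ℝ (Fin n)) (j : Fin n), |x j| ≤ ‖x‖ := by
    intro x j
    rw [EuclideanSpace.norm_eq]
    have h1 : |x j| = Real.sqrt (‖x j‖ ^ 2) := by
      rw [Real.sqrt_sq (norm_nonneg _), Real.norm_eq_abs]
    rw [h1]
    exact Real.sqrt_le_sqrt (Finset.single_le_sum
      (f := fun i => ‖x i‖ ^ 2) (fun i _ => sq_nonneg _) (Finset.mem_univ j))
  -- Part 1 : norm to infinity
  have hnorm : Tendsto (fun t : ℝ => ‖ξ t‖) atTop atTop := by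
    have h1 : Tendsto (fun t : ℝ => |∑ k ∈ S, A k j₀ * t ^ k|) atTop atTop :=
      tendsto_abs_laurent_atTop S (fun k => A k j₀) ⟨k₀, hk₀S, hk₀pos, hA⟩
    refine tendsto_atTop_mono (fun t => ?_) h1
    rw [← hcoord t]
    exact habs (ξ t) j₀
  -- Part 3 : norm times gradient to zero
  have hsum : Tendsto (fun t : ℝ => ∑ j : Fin n, ∑ i : Fin n,
      (ξ t j * MvPolynomial.eval (fun l => ξ t l) (MvPolynomial.pderiv i P)) ^ 2)
      atTop (𝓝 0) := by
    have h1 : Tendsto (fun t : ℝ => ∑ j : Fin n, ∑ i : Fin n,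
        (ξ t j * MvPolynomial.eval (fun l => ξ t l) (MvPolynomial.pderiv i P)) ^ 2)
        atTop (𝓝 (∑ _j : Fin n, ∑ _i : Fin n, (0:ℝ))) := by
      refine tendsto_finset_sum _ fun j _ => tendsto_finset_sum _ fun i _ => ?_
      obtain ⟨sd, dd, hsd, hdd⟩ := hd' i j
      have h2 : Tendsto (fun t : ℝ =>
          ξ t j * MvPolynomial.eval (fun l => ξ t l) (MvPolynomial.pderiv i P))
          atTop (𝓝 0) := by
        refine (tendsto_laurent_zero sd dd hsd).congr' ?_
        filter_upwards [eventually_gt_atTop (0 : ℝ)] with t ht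
        exact (hdd t (ne_of_gt ht)).symm
      simpa using h2.pow 2
    simpa using h1
  have heq : ∀ t : ℝ, ‖ξ t‖ * ‖gradient (fe n P) (ξ t)‖ =
      Real.sqrt (∑ j : Fin n, ∑ i : Fin n,
        (ξ t j * MvPolynomial.eval (fun l => ξ t l) (MvPolynomial.pderiv i P)) ^ 2) := by
    intro t
    rw [gradient_fe, EuclideanSpace.norm_eq, EuclideanSpace.norm_eq,
      ← Real.sqrt_mul (by positivity)]
    congr 1
    rw [Finset.sum_mul_sum]
    refine Finset.sum_congr rfl fun j _ => Finset.sum_congr rfl fun i _ => ?_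
    simp [Real.norm_eq_abs, sq_abs, mul_pow]
  have hgrad : Tendsto (fun t : ℝ => ‖ξ t‖ * ‖gradient (fe n P) (ξ t)‖)
      atTop (𝓝 0) := by
    have h1 := (Real.continuous_sqrt.tendsto' 0 0 Real.sqrt_zero).comp hsum
    exact h1.congr fun t => (heq t).symm
  -- assemble with the sequence t = m + 1
  have htm : Tendsto (fun m : ℕ => (m : ℝ) + 1) atTop atTop :=
    tendsto_atTop_add_const_right atTop 1 tendsto_natCast_atTop_atTop
  exact ⟨fun m => ξ ((m : ℝ) + 1), hnorm.comp htm, hfe.comp htm, hgrad.comp htm⟩
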